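/- Let k and n be integers with 3 ≤ k < n. Let F be a distribution function on [0,1] with quantile function Q, and assume Q is (k−2)-times continuously differentiable on [0,1]. Define β : [0,1] → ℝ by β(x) = x + Σ_{i=1}^{k−2} C(k−2,i) · ((n−k)!/(n−k+i)!) · F(x)^i · Q^{(i)}(F(x)), where Q^{(i)} is the i-th derivative of Q. Then β satisfies the equilibrium equation: for every x ∈ [0,1], ∫₀^x (x − β(y))·F(y)^{n−k}·(F(x) − F(y))^{k−3}·f(y) dy = 0. -/

import Mathlib

open MeasureTheory intervalIntegral Set

namespace KthAux

noncomputable def G (Q : ℝ → ℝ) (N r : ℕ) (t : ℝ) : ℝ :=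
  ∑ i ∈ Finset.range (r + 1),
    (r.choose i : ℝ) * ((N.factorial : ℝ) / ((N - r + i).factorial : ℝ)) *
      (t ^ (N - r + i) * iteratedDerivWithin i Q (Set.Icc 0 1) t)

lemma fact_step (Nf : ℝ) (e : ℕ) (he : 1 ≤ e) :
    Nf / (e.factorial : ℝ) * (e : ℝ) = Nf / ((e - 1).factorial : ℝ) := by
  obtain ⟨d, rfl⟩ : ∃ d, e = d + 1 := ⟨e - 1, by omega⟩
  have h1 : (d.factorial : ℝ) ≠ 0 := Nat.cast_ne_zero.2 d.factorial_ne_zero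
  have h2 : ((d : ℝ) + 1) ≠ 0 := by positivity
  simp only [Nat.add_sub_cancel, Nat.factorial_succ]
  push_cast
  field_simp

lemma hasDeriv_iter (Q : ℝ → ℝ) (m : ℕ) (hQ : ContDiffOn ℝ (m : ℕ) Q (Set.Icc 0 1))
    (i : ℕ) (hi : i < m) {t : ℝ} (ht : t ∈ Set.Icc (0:ℝ) 1) :
    HasDerivWithinAt (iteratedDerivWithin i Q (Set.Icc 0 1))
      (iteratedDerivWithin (i + 1) Q (Set.Icc 0 1) t) (Set.Icc 0 1) t := by
  have hu : UniqueDiffOn ℝ (Set.Icc (0:ℝ) 1) := uniqueDiffOn_Icc one_pos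
  have hd : DifferentiableWithinAt ℝ (iteratedDerivWithin i Q (Set.Icc 0 1)) (Set.Icc 0 1) t :=
    (hQ.differentiableOn_iteratedDerivWithin (by exact_mod_cast hi) hu) t ht
  have h := hd.hasDerivWithinAt
  rwa [← iteratedDerivWithin_succ] at h

lemma G_ladder (Q : ℝ → ℝ) (m N : ℕ) (hQ : ContDiffOn ℝ (m : ℕ) Q (Set.Icc 0 1))
    (hmN : m ≤ N) (r : ℕ) (hr : r < m) {t : ℝ} (ht : t ∈ Set.Icc (0:ℝ) 1) :
    HasDerivWithinAt (G Q N r) (G Q N (r + 1) t) (Set.Icc 0 1) t := by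
  have hrN : r < N := lt_of_lt_of_le hr hmN
  set Qi : ℕ → ℝ → ℝ := fun i => iteratedDerivWithin i Q (Set.Icc 0 1) with hQi_def
  have hder : HasDerivWithinAt (G Q N r)
      (∑ i ∈ Finset.range (r + 1),
        (r.choose i : ℝ) * ((N.factorial : ℝ) / ((N - r + i).factorial : ℝ)) *
          ((↑(N - r + i) * t ^ (N - r + i - 1)) * Qi i t + t ^ (N - r + i) * Qi (i + 1) t))
      (Set.Icc 0 1) t := by
    apply HasDerivWithinAt.fun_sum
    intro i hi
    have hQd : HasDerivWithinAt (Qi i) (Qi (i + 1) t) (Set.Icc 0 1) t :=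
      hasDeriv_iter Q m hQ i (lt_of_lt_of_le (Finset.mem_range.1 hi) (by omega)) ht
    exact ((hasDerivAt_pow (N - r + i) t).hasDerivWithinAt.mul hQd).const_mul _
  have key : (∑ i ∈ Finset.range (r + 1),
        (r.choose i : ℝ) * ((N.factorial : ℝ) / ((N - r + i).factorial : ℝ)) *
          ((↑(N - r + i) * t ^ (N - r + i - 1)) * Qi i t + t ^ (N - r + i) * Qi (i + 1) t))
      = G Q N (r + 1) t := by
    simp only [mul_add, Finset.sum_add_distrib]
    have hA : ∀ i ∈ Finset.range (r + 1),
        (r.choose i : ℝ) * ((N.factorial : ℝ) / ((N - r + i).factorial : ℝ)) *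
          ((↑(N - r + i) * t ^ (N - r + i - 1)) * Qi i t)
        = (r.choose i : ℝ) * ((N.factorial : ℝ) / ((N - (r+1) + i).factorial : ℝ)) *
          (t ^ (N - (r+1) + i) * Qi i t) := by
      intro i hi
      have he : 1 ≤ N - r + i := by omega
      have h1 : N - (r + 1) + i = N - r + i - 1 := by omega
      rw [h1, ← fact_step (N.factorial : ℝ) (N - r + i) he]
      ring
    have hB : ∀ i ∈ Finset.range (r + 1),
        (r.choose i : ℝ) * ((N.factorial : ℝ) / ((N - r + i).factorial : ℝ)) *
          (t ^ (N - r + i) * Qi (i + 1) t)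
        = (r.choose i : ℝ) * ((N.factorial : ℝ) / ((N - (r+1) + (i+1)).factorial : ℝ)) *
          (t ^ (N - (r+1) + (i+1)) * Qi (i + 1) t) := by
      intro i hi
      have h1 : N - (r + 1) + (i + 1) = N - r + i := by omega
      rw [h1]
    rw [Finset.sum_congr rfl hA, Finset.sum_congr rfl hB]
    show _ = G Q N (r+1) t
    rw [G, Finset.sum_range_succ' _ (r + 1)]
    have hPascal : ∀ j ∈ Finset.range (r + 1),
        ((r+1).choose (j+1) : ℝ) * ((N.factorial : ℝ) / ((N - (r+1) + (j+1)).factorial : ℝ)) *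
          (t ^ (N - (r+1) + (j+1)) * Qi (j + 1) t)
        = (r.choose (j+1) : ℝ) * ((N.factorial : ℝ) / ((N - (r+1) + (j+1)).factorial : ℝ)) *
            (t ^ (N - (r+1) + (j+1)) * Qi (j + 1) t)
          + (r.choose j : ℝ) * ((N.factorial : ℝ) / ((N - (r+1) + (j+1)).factorial : ℝ)) *
            (t ^ (N - (r+1) + (j+1)) * Qi (j + 1) t) := by
      intro j hj
      rw [Nat.choose_succ_succ]
      push_cast
      ring
    rw [Finset.sum_congr rfl hPascal, Finset.sum_add_distrib]
    have hh : (∑ j ∈ Finset.range (r + 1),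
          (r.choose (j+1) : ℝ) * ((N.factorial : ℝ) / ((N - (r+1) + (j+1)).factorial : ℝ)) *
            (t ^ (N - (r+1) + (j+1)) * Qi (j + 1) t))
          + ((r+1).choose 0 : ℝ) * ((N.factorial : ℝ) / ((N - (r+1) + 0).factorial : ℝ)) *
            (t ^ (N - (r+1) + 0) * Qi 0 t)
        = ∑ i ∈ Finset.range (r + 1),
            (r.choose i : ℝ) * ((N.factorial : ℝ) / ((N - (r+1) + i).factorial : ℝ)) *
              (t ^ (N - (r+1) + i) * Qi i t) := by
      have h0 : ((r+1).choose 0 : ℝ) = (r.choose 0 : ℝ) := by simp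
      rw [h0]
      rw [← Finset.sum_range_succ' (fun i =>
        (r.choose i : ℝ) * ((N.factorial : ℝ) / ((N - (r+1) + i).factorial : ℝ)) *
          (t ^ (N - (r+1) + i) * Qi i t)) (r + 1)]
      rw [Finset.sum_range_succ]
      simp [Nat.choose_succ_self]
    simp only [hQi_def, add_zero] at hh ⊢
    linarith [hh]
  rw [← key]
  exact hder

lemma telescope (m : ℕ) (hm : 1 ≤ m) (σ : ℝ) (K : ℕ → ℝ → ℝ) {s : Set ℝ} {t : ℝ}
    (hK : ∀ r < m, HasDerivWithinAt (K r) (K (r + 1) t) s t) :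
    HasDerivWithinAt
      (fun u => ∑ r ∈ Finset.range m,
        (((m - 1).factorial : ℝ) / (r.factorial : ℝ)) * ((σ - u) ^ r * K r u))
      ((σ - t) ^ (m - 1) * K m t) s t := by
  have hder : HasDerivWithinAt
      (fun u => ∑ r ∈ Finset.range m,
        (((m - 1).factorial : ℝ) / (r.factorial : ℝ)) * ((σ - u) ^ r * K r u))
      (∑ r ∈ Finset.range m,
        (((m - 1).factorial : ℝ) / (r.factorial : ℝ)) *
          ((↑r * (σ - t) ^ (r - 1) * (-1)) * K r t + (σ - t) ^ r * K (r + 1) t)) s t := by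
    apply HasDerivWithinAt.fun_sum
    intro r hr
    have hlin : HasDerivAt (fun u : ℝ => σ - u) (-1) t := by
      simpa using (hasDerivAt_id t).const_sub σ
    exact ((hlin.pow r).hasDerivWithinAt.mul (hK r (Finset.mem_range.1 hr))).const_mul _
  have key : (∑ r ∈ Finset.range m,
        (((m - 1).factorial : ℝ) / (r.factorial : ℝ)) *
          ((↑r * (σ - t) ^ (r - 1) * (-1)) * K r t + (σ - t) ^ r * K (r + 1) t))
      = (σ - t) ^ (m - 1) * K m t := by
    obtain ⟨M, rfl⟩ : ∃ M, m = M + 1 := ⟨m - 1, by omega⟩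
    simp only [Nat.add_sub_cancel, mul_add, Finset.sum_add_distrib]
    rw [Finset.sum_range_succ' (fun r =>
      ((M.factorial : ℝ) / (r.factorial : ℝ)) * ((↑r * (σ - t) ^ (r - 1) * (-1)) * K r t)) M]
    rw [Finset.sum_range_succ (fun r =>
      ((M.factorial : ℝ) / (r.factorial : ℝ)) * ((σ - t) ^ r * K (r + 1) t)) M]
    have hcancel : ∀ r ∈ Finset.range M,
        ((M.factorial : ℝ) / ((r + 1).factorial : ℝ)) *
            ((↑(r + 1) * (σ - t) ^ (r + 1 - 1) * (-1)) * K (r + 1) t)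
        = -(((M.factorial : ℝ) / (r.factorial : ℝ)) * ((σ - t) ^ r * K (r + 1) t)) := by
      intro r hr
      have h1 : (M.factorial : ℝ) / ((r + 1).factorial : ℝ) * ((r : ℝ) + 1)
          = (M.factorial : ℝ) / (r.factorial : ℝ) := by
        have := fact_step (M.factorial : ℝ) (r + 1) (by omega)
        simpa [Nat.add_sub_cancel] using this
      have h2 : r + 1 - 1 = r := by omega
      rw [h2]
      push_cast
      linear_combination (-((σ - t) ^ r * K (r + 1) t)) * h1
    rw [Finset.sum_congr rfl hcancel, Finset.sum_neg_distrib]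
    have hMM : (M.factorial : ℝ) / (M.factorial : ℝ) = 1 :=
      div_self (Nat.cast_ne_zero.2 M.factorial_ne_zero)
    simp only [Nat.cast_zero, zero_mul, mul_zero, neg_zero]
    rw [hMM]
    ring
  rw [← key]
  exact hder

lemma iter_eq (Q : ℝ → ℝ) (i : ℕ) {t : ℝ} (ht : t ∈ Set.Ioo (0:ℝ) 1) :
    iteratedDerivWithin i Q (Set.Icc 0 1) t = iteratedDeriv i Q t := by
  have h1 : Set.Icc (0:ℝ) 1 ∈ nhds t := Icc_mem_nhds ht.1 ht.2
  have h2 : iteratedFDerivWithin ℝ i Q (Set.Icc 0 1) t = iteratedFDeriv ℝ i Q t := by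
    rw [← iteratedFDerivWithin_univ, ← Set.univ_inter (Set.Icc (0:ℝ) 1)]
    exact iteratedFDerivWithin_inter h1
  rw [iteratedDerivWithin_eq_iteratedFDerivWithin, iteratedDeriv_eq_iteratedFDeriv, h2]

end KthAux

/-- The bid function `β x = x + Σ_{i=1}^{k-2} C(k-2,i) ((n-k)!/(n-k+i)!) F(x)^i Q^{(i)}(F x)`
satisfies the equilibrium equation of the `k`-th price auction with `n` bidders. -/
theorem kth_price_bid_function_satisfies_equilibrium
    (k n : ℕ) (hk : 3 ≤ k) (hkn : k < n)
    (F f Q β : ℝ → ℝ)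
    (hF0 : F 0 = 0) (hF1 : F 1 = 1)
    (hFderiv : ∀ x ∈ Icc (0:ℝ) 1, HasDerivAt F (f x) x)
    (hfcont : ContinuousOn f (Icc (0:ℝ) 1))
    (hfpos : ∀ x ∈ Icc (0:ℝ) 1, 0 < f x)
    (hQF : ∀ x ∈ Icc (0:ℝ) 1, Q (F x) = x)
    (hFQ : ∀ t ∈ Icc (0:ℝ) 1, F (Q t) = t)
    (hQsmooth : ContDiffOn ℝ (k - 2 : ℕ) Q (Icc (0:ℝ) 1))
    (hβ : ∀ x ∈ Icc (0:ℝ) 1,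
      β x = x + ∑ i ∈ Finset.Icc 1 (k - 2),
        ((k - 2).choose i : ℝ) * (((n - k).factorial : ℝ) / ((n - k + i).factorial : ℝ)) *
          F x ^ i * iteratedDeriv i Q (F x)) :
    ∀ x ∈ Icc (0:ℝ) 1,
      ∫ y in (0:ℝ)..x,
        (x - β y) * F y ^ (n - k) * (F x - F y) ^ (k - 3) * f y = 0 := by
  intro x hx
  have hm1 : 1 ≤ k - 2 := by omega
  have hp1 : 1 ≤ n - k := by omega
  set m := k - 2 with hm_def
  set p := n - k with hp_def
  have hk3 : k - 3 = m - 1 := by omega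
  set N := p + m with hN_def
  have hmN : m ≤ N := by omega
  have hu : UniqueDiffOn ℝ (Set.Icc (0:ℝ) 1) := uniqueDiffOn_Icc one_pos
  have hQ : ContDiffOn ℝ (m : ℕ) Q (Set.Icc 0 1) := hQsmooth
  simp only [hk3]
  -- basics about F
  have hFcont : ContinuousOn F (Set.Icc 0 1) :=
    fun y hy => (hFderiv y hy).continuousAt.continuousWithinAt
  have hFmono : StrictMonoOn F (Set.Icc 0 1) := by
    apply strictMonoOn_of_deriv_pos (convex_Icc 0 1) hFcont
    intro y hy
    rw [interior_Icc] at hy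
    have hy' : y ∈ Set.Icc (0:ℝ) 1 := ⟨le_of_lt hy.1, le_of_lt hy.2⟩
    rw [(hFderiv y hy').deriv]
    exact hfpos y hy'
  have hFmaps : Set.MapsTo F (Set.Icc 0 1) (Set.Icc 0 1) := by
    intro y hy
    have h0 : (0:ℝ) ∈ Set.Icc (0:ℝ) 1 := by norm_num
    have h1 : (1:ℝ) ∈ Set.Icc (0:ℝ) 1 := by norm_num
    exact ⟨hF0 ▸ hFmono.monotoneOn h0 hy hy.1, hF1 ▸ hFmono.monotoneOn hy h1 hy.2⟩
  set s := F x with hs_def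
  have hsmem : s ∈ Set.Icc (0:ℝ) 1 := hFmaps hx
  set cc : ℝ := (p.factorial : ℝ) / (N.factorial : ℝ) with hcc_def
  set Kf : ℕ → ℝ → ℝ := fun r t =>
    ((N.factorial : ℝ) / ((N - r).factorial : ℝ)) * x * t ^ (N - r) - KthAux.G Q N r t
    with hKf_def
  -- the ladder for Kf
  have hKlad : ∀ t ∈ Set.Icc (0:ℝ) 1, ∀ r < m,
      HasDerivWithinAt (Kf r) (Kf (r + 1) t) (Set.Icc 0 1) t := by
    intro t ht r hr
    have hpow : HasDerivAt
        (fun u : ℝ => ((N.factorial : ℝ) / ((N - r).factorial : ℝ)) * x * u ^ (N - r))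
        (((N.factorial : ℝ) / ((N - r).factorial : ℝ)) * x * (↑(N - r) * t ^ (N - r - 1))) t :=
      (hasDerivAt_pow (N - r) t).const_mul _
    have hval : ((N.factorial : ℝ) / ((N - r).factorial : ℝ)) * x * (↑(N - r) * t ^ (N - r - 1))
        = ((N.factorial : ℝ) / ((N - (r + 1)).factorial : ℝ)) * x * t ^ (N - (r + 1)) := by
      have he : 1 ≤ N - r := by omega
      have h1 : N - (r + 1) = N - r - 1 := by omega
      rw [h1, ← KthAux.fact_step (N.factorial : ℝ) (N - r) he]
      ring
    have hG := KthAux.G_ladder Q m N hQ hmN r hr ht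
    have hsub := hpow.hasDerivWithinAt.sub hG
    rw [hval] at hsub
    exact hsub
  set H : ℝ → ℝ := fun u => cc * ∑ r ∈ Finset.range m,
    (((m - 1).factorial : ℝ) / (r.factorial : ℝ)) * ((s - u) ^ r * Kf r u) with hH_def
  set E : ℝ → ℝ := fun t => cc * ((s - t) ^ (m - 1) * Kf m t) with hE_def
  have hH : ∀ t ∈ Set.Icc (0:ℝ) 1, HasDerivWithinAt H (E t) (Set.Icc 0 1) t := by
    intro t ht
    exact (KthAux.telescope m hm1 s Kf (fun r hr => hKlad t ht r hr)).const_mul cc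
  have hHF : ∀ y ∈ Set.Icc (0:ℝ) 1,
      HasDerivWithinAt (H ∘ F) (E (F y) * f y) (Set.Icc 0 1) y := fun y hy =>
    HasDerivWithinAt.comp y (hH (F y) (hFmaps hy)) ((hFderiv y hy).hasDerivWithinAt) hFmaps
  have hxI : Set.Icc (0:ℝ) x ⊆ Set.Icc (0:ℝ) 1 := Set.Icc_subset_Icc le_rfl hx.2
  have hHFcont : ContinuousOn (H ∘ F) (Set.Icc 0 x) :=
    fun y hy => ((hHF y (hxI hy)).continuousWithinAt).mono hxI
  have hint : ∀ y ∈ Set.Ioo (0:ℝ) x, y ∈ Set.Ioo (0:ℝ) 1 ∧ F y ∈ Set.Ioo (0:ℝ) 1 := by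
    intro y hy
    have hy1 : y ∈ Set.Icc (0:ℝ) 1 := hxI ⟨le_of_lt hy.1, le_of_lt hy.2⟩
    have hylt1 : y < 1 := lt_of_lt_of_le hy.2 hx.2
    refine ⟨⟨hy.1, hylt1⟩, ?_, ?_⟩
    · rw [← hF0]
      exact hFmono (by norm_num) hy1 hy.1
    · calc F y < F x := hFmono hy1 hx hy.2
        _ ≤ 1 := (hFmaps hx).2
  have hderivIoo : ∀ y ∈ Set.Ioo (0:ℝ) x,
      HasDerivWithinAt (H ∘ F) (E (F y) * f y) (Set.Ioi y) y := by
    intro y hy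
    obtain ⟨hy1, hFy1⟩ := hint y hy
    have hHd : HasDerivAt H (E (F y)) (F y) :=
      (hH (F y) (Set.mem_Icc_of_Ioo hFy1)).hasDerivAt (Icc_mem_nhds hFy1.1 hFy1.2)
    have hFd : HasDerivAt F (f y) y := hFderiv y (Set.mem_Icc_of_Ioo hy1)
    exact (hHd.comp y hFd).hasDerivWithinAt
  -- integrability
  have hGcont : ContinuousOn (KthAux.G Q N m) (Set.Icc (0:ℝ) 1) := by
    apply continuousOn_finset_sum
    intro i hi
    have hQicont : ContinuousOn (iteratedDerivWithin i Q (Set.Icc 0 1)) (Set.Icc (0:ℝ) 1) :=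
      hQ.continuousOn_iteratedDerivWithin
        (by exact_mod_cast Nat.lt_succ_iff.1 (Finset.mem_range.1 hi)) hu
    exact continuousOn_const.mul ((continuous_pow _).continuousOn.mul hQicont)
  have hKmcont : ContinuousOn (Kf m) (Set.Icc (0:ℝ) 1) := by
    simp only [hKf_def]
    exact ((continuous_const.mul (continuous_pow (N - m))).continuousOn).sub hGcont
  have hEcont : ContinuousOn E (Set.Icc (0:ℝ) 1) := by
    simp only [hE_def]
    exact continuousOn_const.mul
      ((((continuous_const.sub continuous_id).pow (m - 1)).continuousOn).mul hKmcont)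
  have hDcont : ContinuousOn (fun y => E (F y) * f y) (Set.Icc 0 x) :=
    (hEcont.comp (hFcont.mono hxI) (fun y hy => hFmaps (hxI hy))).mul (hfcont.mono hxI)
  have hDint : IntervalIntegrable (fun y => E (F y) * f y) volume 0 x := by
    apply ContinuousOn.intervalIntegrable
    rwa [Set.uIcc_of_le hx.1]
  have hFTC := intervalIntegral.integral_eq_sub_of_hasDeriv_right_of_le hx.1 hHFcont
    hderivIoo hDint
  -- boundary values
  have hH0 : H 0 = 0 := by
    have hz : ∀ r ∈ Finset.range m,
        (((m - 1).factorial : ℝ) / (r.factorial : ℝ)) * ((s - 0) ^ r * Kf r 0) = 0 := by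
      intro r hr
      have hr' : r < m := Finset.mem_range.1 hr
      have h1 : (0:ℝ) ^ (N - r) = 0 := zero_pow (by omega)
      have h2 : KthAux.G Q N r 0 = 0 := by
        unfold KthAux.G
        apply Finset.sum_eq_zero
        intro i hi
        have h3 : (0:ℝ) ^ (N - r + i) = 0 := zero_pow (by omega)
        rw [h3]
        ring
      simp only [hKf_def]
      rw [h1, h2]
      ring
    show cc * _ = 0
    rw [Finset.sum_eq_zero hz]
    ring
  have hK0s : Kf 0 s = 0 := by
    have hG0 : KthAux.G Q N 0 s = (N.factorial : ℝ) / (N.factorial : ℝ) * (s ^ N * x) := by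
      unfold KthAux.G
      rw [Finset.sum_range_one]
      have hQs : Q s = x := hQF x hx
      simp [iteratedDerivWithin_zero, hQs]
    simp only [hKf_def]
    rw [hG0]
    simp only [Nat.sub_zero]
    ring
  have hHs : H s = 0 := by
    have hz : ∀ r ∈ Finset.range m,
        (((m - 1).factorial : ℝ) / (r.factorial : ℝ)) * ((s - s) ^ r * Kf r s) = 0 := by
      intro r hr
      rcases Nat.eq_zero_or_pos r with h | h
      · subst h
        rw [hK0s]
        ring
      · have h1 : (s - s) ^ r = 0 := by
          rw [sub_self]
          exact zero_pow (by omega)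
        rw [h1]
        ring
    show cc * _ = 0
    rw [Finset.sum_eq_zero hz]
    ring
  -- a.e. equality of integrands
  have hne : ∀ᵐ y : ℝ, y ≠ x := by
    have hset : {y : ℝ | ¬ y ≠ x} = {x} := by ext y; simp
    rw [ae_iff, hset]
    exact measure_singleton x
  have hae : ∀ᵐ y : ℝ, y ∈ Set.uIoc (0:ℝ) x →
      (x - β y) * F y ^ p * (s - F y) ^ (m - 1) * f y = E (F y) * f y := by
    filter_upwards [hne] with y hyne hymem
    rw [Set.uIoc_of_le hx.1] at hymem
    have hyI : y ∈ Set.Ioo (0:ℝ) x := ⟨hymem.1, lt_of_le_of_ne hymem.2 hyne⟩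
    obtain ⟨hy1, hFy1⟩ := hint y hyI
    have hmem : y ∈ Set.Icc (0:ℝ) 1 := Set.mem_Icc_of_Ioo hy1
    set t := F y with ht_def
    have hiter : ∀ i, iteratedDeriv i Q t = iteratedDerivWithin i Q (Set.Icc 0 1) t :=
      fun i => (KthAux.iter_eq Q i hFy1).symm
    have hβ' := hβ y hmem
    rw [← ht_def] at hβ'
    simp only [hiter] at hβ'
    have hyQ : y = Q t := (hQF y hmem).symm
    have hN0 : (N.factorial : ℝ) ≠ 0 := Nat.cast_ne_zero.2 N.factorial_ne_zero
    have hterm : ∀ i : ℕ, cc * ((N.factorial : ℝ) / ((p + i).factorial : ℝ))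
        = (p.factorial : ℝ) / ((p + i).factorial : ℝ) := by
      intro i
      have hpi0 : ((p + i).factorial : ℝ) ≠ 0 := Nat.cast_ne_zero.2 (p + i).factorial_ne_zero
      rw [hcc_def]
      field_simp
    have hG : cc * KthAux.G Q N m t
        = ∑ i ∈ Finset.range (m + 1),
            (m.choose i : ℝ) * ((p.factorial : ℝ) / ((p + i).factorial : ℝ)) * t ^ i *
              iteratedDerivWithin i Q (Set.Icc 0 1) t * t ^ p := by
      unfold KthAux.G
      rw [Finset.mul_sum]
      apply Finset.sum_congr rfl
      intro i hi
      rw [show N - m + i = p + i from by omega, pow_add]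
      have h1 := hterm i
      linear_combination
        (t ^ p * t ^ i * iteratedDerivWithin i Q (Set.Icc 0 1) t * (m.choose i : ℝ)) * h1
    have hfact1 : (p.factorial : ℝ) / ((p + 0).factorial : ℝ) = 1 := by
      simp only [Nat.add_zero]
      exact div_self (Nat.cast_ne_zero.2 p.factorial_ne_zero)
    have hsum : ∑ i ∈ Finset.range (m + 1),
          (m.choose i : ℝ) * ((p.factorial : ℝ) / ((p + i).factorial : ℝ)) * t ^ i *
            iteratedDerivWithin i Q (Set.Icc 0 1) t
        = Q t + ∑ i ∈ Finset.Icc 1 m,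
            (m.choose i : ℝ) * ((p.factorial : ℝ) / ((p + i).factorial : ℝ)) * t ^ i *
              iteratedDerivWithin i Q (Set.Icc 0 1) t := by
      rw [← Nat.Ico_zero_eq_range, Finset.sum_eq_sum_Ico_succ_bot (by omega), Finset.Ico_add_one_right_eq_Icc]
      simp only [Nat.choose_zero_right, Nat.cast_one, pow_zero, one_mul, mul_one, hfact1,
        iteratedDerivWithin_zero]
    have hβy : β y * t ^ p = cc * KthAux.G Q N m t := by
      rw [hβ', hyQ, ← hsum, Finset.sum_mul, hG]
    have hcc1 : cc * ((N.factorial : ℝ) / (p.factorial : ℝ)) = 1 := by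
      rw [hcc_def]
      have hp0 : (p.factorial : ℝ) ≠ 0 := Nat.cast_ne_zero.2 p.factorial_ne_zero
      field_simp
    simp only [hE_def, hKf_def]
    rw [show N - m = p from by omega]
    linear_combination (-((s - t) ^ (m - 1) * f y * x * t ^ p)) * hcc1
      + (-((s - t) ^ (m - 1) * f y)) * hβy
  rw [intervalIntegral.integral_congr_ae hae, hFTC]
  simp only [Function.comp_apply]
  rw [hF0, hH0, ← hs_def, hHs]
  ring
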